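/- Let 2/3 < α < 1. For N ∈ ℕ let n^{(N)} be the integer sequence with n^{(N)}_k = (-1)^{N-k} C(N, N-k) for 0 ≤ k ≤ N and 0 otherwise. Then ∫_{-(1-α)/2}^{(1-α)/2} |Σ_k n^{(N)}_k e^{2πikt}|² dt ≤ (1-α) (2 sin(π(1-α)/2))^{2N}, and since 2 sin(π(1-α)/2) < 1 this quantity tends to 0 as N → ∞. -/

import Mathlib

open MeasureTheory Real Filter

lemma sum_eq (t : ℝ) (N : ℕ) :
    (∑ k ∈ Finset.range (N + 1),
        ((-1 : ℂ) ^ (N - k) * (N.choose (N - k) : ℂ) *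
          Complex.exp (2 * Real.pi * Complex.I * k * t)))
    = (Complex.exp (2 * Real.pi * Complex.I * t) - 1) ^ N := by
  rw [sub_pow]
  apply Finset.sum_congr rfl
  intro k hk
  rw [Finset.mem_range] at hk
  rw [← Complex.exp_nat_mul, one_pow, Nat.choose_symm (by omega)]
  have h1 : ((-1 : ℂ)) ^ (N - k) = (-1) ^ (k + N) := by
    have : k + N = (N - k) + 2 * k := by omega
    rw [this, pow_add]; simp [pow_mul]
  rw [h1]
  ring_nf

lemma norm_eq (t : ℝ) :
    ‖Complex.exp (2 * Real.pi * Complex.I * t) - 1‖ = 2 * |Real.sin (Real.pi * t)| := by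
  have h : (2 * (Real.pi : ℂ) * Complex.I * t) = ((2 * Real.pi * t : ℝ) : ℂ) * Complex.I := by
    push_cast; ring
  rw [h, Complex.exp_mul_I, ← Complex.ofReal_cos, ← Complex.ofReal_sin,
    Complex.norm_def, Complex.normSq_apply]
  have hid : (Real.cos (2 * Real.pi * t) - 1) ^ 2 + (Real.sin (2 * Real.pi * t)) ^ 2
      = (2 * |Real.sin (Real.pi * t)|) ^ 2 := by
    have h1 := Real.sin_sq_add_cos_sq (2 * Real.pi * t)
    have h2 : Real.cos (2 * Real.pi * t) = 2 * Real.cos (Real.pi * t) ^ 2 - 1 := by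
      rw [show 2 * Real.pi * t = 2 * (Real.pi * t) by ring, Real.cos_two_mul]
    have h3 := Real.sin_sq_add_cos_sq (Real.pi * t)
    have h4 : |Real.sin (Real.pi * t)| ^ 2 = Real.sin (Real.pi * t) ^ 2 := sq_abs _
    nlinarith
  simp only [Complex.add_re, Complex.sub_re, Complex.ofReal_re, Complex.mul_re,
    Complex.ofReal_im, Complex.I_re, Complex.I_im, Complex.one_re, Complex.add_im,
    Complex.sub_im, Complex.mul_im, Complex.one_im]
  rw [show (Real.cos (2*Real.pi*t) + (Real.sin (2*Real.pi*t) * 0 - 0 * 1) - 1) * (Real.cos (2*Real.pi*t) + (Real.sin (2*Real.pi*t) * 0 - 0 * 1) - 1) +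
      (0 + (Real.sin (2*Real.pi*t) * 1 + 0 * 0) - 0) * (0 + (Real.sin (2*Real.pi*t) * 1 + 0 * 0) - 0)
      = (Real.cos (2*Real.pi*t) - 1) ^ 2 + (Real.sin (2*Real.pi*t)) ^ 2 by ring, hid,
    Real.sqrt_sq (by positivity)]

theorem stmt11 (α : ℝ) (h1 : 2/3 < α) (h2 : α < 1) :
    (∀ N : ℕ,
      (∫ t in Set.Ioo (-((1 - α)/2)) ((1 - α)/2),
        ‖∑ k ∈ Finset.range (N + 1),
            ((-1 : ℂ) ^ (N - k) * (N.choose (N - k) : ℂ) *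
              Complex.exp (2 * Real.pi * Complex.I * k * t))‖ ^ 2) ≤
      (1 - α) * (2 * Real.sin (Real.pi * (1 - α) / 2)) ^ (2 * N)) ∧
    2 * Real.sin (Real.pi * (1 - α) / 2) < 1 ∧
    Tendsto (fun N : ℕ =>
      ∫ t in Set.Ioo (-((1 - α)/2)) ((1 - α)/2),
        ‖∑ k ∈ Finset.range (N + 1),
            ((-1 : ℂ) ^ (N - k) * (N.choose (N - k) : ℂ) *
              Complex.exp (2 * Real.pi * Complex.I * k * t))‖ ^ 2)
      atTop (nhds 0) := by
  have hπ := Real.pi_pos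
  set c : ℝ := Real.pi * (1 - α) / 2 with hc
  have hc0 : 0 < c := by
    apply div_pos (mul_pos hπ (by linarith)) two_pos
  have hc6 : c < Real.pi / 6 := by
    rw [hc]
    rw [div_lt_div_iff₀ two_pos (by norm_num : (0:ℝ) < 6)]
    have : (1 - α) < 1/3 := by linarith
    nlinarith
  have hcpi2 : c < Real.pi / 2 := by linarith [Real.pi_pos]
  have hsinlt : Real.sin c < 1/2 := by
    have := Real.strictMonoOn_sin (by constructor <;> [linarith; linarith] :
      c ∈ Set.Icc (-(Real.pi/2)) (Real.pi/2))
    calc Real.sin c < Real.sin (Real.pi/6) := by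
          apply Real.strictMonoOn_sin ⟨by linarith, by linarith⟩
            ⟨by linarith, by linarith⟩ hc6
      _ = 1/2 := Real.sin_pi_div_six
  have hsin0 : 0 ≤ Real.sin c := Real.sin_nonneg_of_nonneg_of_le_pi (le_of_lt hc0)
    (by linarith)
  have hB1 : 2 * Real.sin c < 1 := by linarith
  have hB0 : 0 ≤ 2 * Real.sin c := by linarith
  -- pointwise bound
  have hpt : ∀ N : ℕ, ∀ t ∈ Set.Ioo (-((1 - α)/2)) ((1 - α)/2),
      ‖∑ k ∈ Finset.range (N + 1),
          ((-1 : ℂ) ^ (N - k) * (N.choose (N - k) : ℂ) *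
            Complex.exp (2 * Real.pi * Complex.I * k * t))‖ ^ 2
      ≤ (2 * Real.sin c) ^ (2 * N) := by
    intro N t ht
    rw [sum_eq, norm_pow, norm_eq, pow_mul, ← pow_mul, mul_comm N 2, pow_mul]
    apply pow_le_pow_left₀ (by positivity)
    apply pow_le_pow_left₀ (by positivity)
    have h1 : |Real.pi * t| ≤ c := by
      rw [hc, abs_mul, abs_of_pos hπ]
      rw [mul_div_assoc]
      apply mul_le_mul_of_nonneg_left _ (le_of_lt hπ)
      rw [abs_le]
      constructor <;> [linarith [ht.1]; linarith [ht.2]]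
    have hxpi : |Real.pi * t| ≤ Real.pi := le_trans h1 (by linarith)
    have habs : |Real.sin (Real.pi * t)| = Real.sin |Real.pi * t| := by
      rcases le_total 0 (Real.pi * t) with h | h
      · rw [abs_of_nonneg h, abs_of_nonneg (Real.sin_nonneg_of_nonneg_of_le_pi h
          (by rw [abs_of_nonneg h] at hxpi; exact hxpi))]
      · have h0 : 0 ≤ Real.sin (-(Real.pi * t)) :=
          Real.sin_nonneg_of_nonneg_of_le_pi (by linarith)
            (by rw [abs_of_nonpos h] at hxpi; exact hxpi)
        rw [Real.sin_neg] at h0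
        rw [abs_of_nonpos h, Real.sin_neg, abs_of_nonpos (by linarith)]
    have h2 : |Real.sin (Real.pi * t)| ≤ Real.sin c := by
      rw [habs]
      exact Real.strictMonoOn_sin.monotoneOn
        ⟨by linarith [abs_nonneg (Real.pi * t)], by linarith⟩
        ⟨by linarith, by linarith⟩ h1
    linarith
  have hcont : ∀ N : ℕ, Continuous (fun t : ℝ =>
      ‖∑ k ∈ Finset.range (N + 1),
          ((-1 : ℂ) ^ (N - k) * (N.choose (N - k) : ℂ) *
            Complex.exp (2 * Real.pi * Complex.I * k * t))‖ ^ 2) := by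
    intro N
    apply Continuous.pow
    apply Continuous.norm
    apply continuous_finset_sum
    intro k _
    exact continuous_const.mul (Complex.continuous_exp.comp (by continuity))
  have hvol : (volume (Set.Ioo (-((1 - α)/2)) ((1 - α)/2))).toReal = 1 - α := by
    rw [Real.volume_Ioo, ENNReal.toReal_ofReal (by linarith)]
    ring
  have hmain : ∀ N : ℕ,
      (∫ t in Set.Ioo (-((1 - α)/2)) ((1 - α)/2),
        ‖∑ k ∈ Finset.range (N + 1),
            ((-1 : ℂ) ^ (N - k) * (N.choose (N - k) : ℂ) *
              Complex.exp (2 * Real.pi * Complex.I * k * t))‖ ^ 2) ≤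
      (1 - α) * (2 * Real.sin c) ^ (2 * N) := by
    intro N
    have hint : IntegrableOn (fun t : ℝ =>
        ‖∑ k ∈ Finset.range (N + 1),
            ((-1 : ℂ) ^ (N - k) * (N.choose (N - k) : ℂ) *
              Complex.exp (2 * Real.pi * Complex.I * k * t))‖ ^ 2)
        (Set.Ioo (-((1 - α)/2)) ((1 - α)/2)) := by
      exact ((hcont N).continuousOn.integrableOn_compact isCompact_Icc).mono_set Set.Ioo_subset_Icc_self
    calc (∫ t in Set.Ioo (-((1 - α)/2)) ((1 - α)/2),
          ‖∑ k ∈ Finset.range (N + 1),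
              ((-1 : ℂ) ^ (N - k) * (N.choose (N - k) : ℂ) *
                Complex.exp (2 * Real.pi * Complex.I * k * t))‖ ^ 2)
        ≤ ∫ _t in Set.Ioo (-((1 - α)/2)) ((1 - α)/2), (2 * Real.sin c) ^ (2 * N) := by
          apply setIntegral_mono_on hint (integrableOn_const (by
            rw [Real.volume_Ioo]; exact ENNReal.ofReal_lt_top.ne)) measurableSet_Ioo
          exact hpt N
      _ = (1 - α) * (2 * Real.sin c) ^ (2 * N) := by
          rw [setIntegral_const, smul_eq_mul, measureReal_def, hvol]
  refine ⟨hmain, hB1, ?_⟩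
  have hnn : ∀ N : ℕ, 0 ≤ ∫ t in Set.Ioo (-((1 - α)/2)) ((1 - α)/2),
      ‖∑ k ∈ Finset.range (N + 1),
          ((-1 : ℂ) ^ (N - k) * (N.choose (N - k) : ℂ) *
            Complex.exp (2 * Real.pi * Complex.I * k * t))‖ ^ 2 := by
    intro N
    apply integral_nonneg
    intro t
    positivity
  have hlim : Tendsto (fun N : ℕ => (1 - α) * (2 * Real.sin c) ^ (2 * N)) atTop (nhds 0) := by
    have : Tendsto (fun N : ℕ => ((2 * Real.sin c) ^ 2) ^ N) atTop (nhds 0) := by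
      apply tendsto_pow_atTop_nhds_zero_of_lt_one (by positivity)
      nlinarith
    have h' : Tendsto (fun N : ℕ => (1 - α) * ((2 * Real.sin c) ^ 2) ^ N) atTop (nhds ((1-α) * 0)) :=
      this.const_mul _
    rw [mul_zero] at h'
    convert h' using 2 with N
    rw [← pow_mul, mul_comm 2 N, pow_mul]
  exact squeeze_zero hnn hmain hlim
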